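/- Let (X, d) be a metric space with a doubling measure m, and let 1 ≤ p < ∞. Define T_t f(x) = (1/m(B(x,t))) ∫_{B(x,t)} f dm. Then there exists a constant C > 0 (depending only on the doubling constant) such that for all λ > 0 and all f ∈ L^p(X,m), (m × 𝓛)({(x,t) ∈ X × (0,∞) : |T_t f(x)| / t^{1/p} > λ}) ≤ C ‖f‖_{L^p(X,m)}^p / λ^p. -/

import Mathlib

open MeasureTheory Filter Set
open scoped ENNReal

noncomputable section

/-- Auxiliary lemma: if the ball average of `f` at `(x,t)` is large, then the pair `(x,t)` is
"bad" in the sense that `l^p * t * m(B(x,t)) < ∫_{B(x,t)} |f|^p`. This is Jensen's inequality. -/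
lemma weak_type_aux_avg_bad {X : Type*} [MetricSpace X] [MeasurableSpace X] [BorelSpace X]
    (m : Measure X) {p : ℝ} (hp : 1 ≤ p) {f : X → ℝ} (hf : MemLp f (ENNReal.ofReal p) m)
    {l : ℝ} (hl : 0 < l) {x : X} {t : ℝ} (ht : 0 < t)
    (hpos : 0 < m (Metric.ball x t)) (hfin : m (Metric.ball x t) < ∞)
    (hlt : l * t ^ (1 / p) < |⨍ y in Metric.ball x t, f y ∂m|) :
    ENNReal.ofReal (l ^ p) * (ENNReal.ofReal t * m (Metric.ball x t)) <
      ∫⁻ y in Metric.ball x t, ENNReal.ofReal (|f y| ^ p) ∂m := by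
  have hp0 : (0 : ℝ) < p := lt_of_lt_of_le one_pos hp
  set B := Metric.ball x t with hBdef
  set μ := m.restrict B with hμdef
  have hμuniv : μ Set.univ = m B := by simp [hμdef]
  haveI hfinμ : IsFiniteMeasure μ := ⟨by rw [hμuniv]; exact hfin⟩
  haveI : NeZero μ := ⟨by
    intro h
    rw [h] at hμuniv
    simp at hμuniv
    exact hpos.ne' hμuniv.symm⟩
  have h1p : (1 : ℝ≥0∞) ≤ ENNReal.ofReal p := by
    rw [← ENNReal.ofReal_one]; exact ENNReal.ofReal_le_ofReal hp
  have hfm : MemLp f (ENNReal.ofReal p) μ := hf.restrict B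
  have hfi : Integrable f μ := hfm.integrable h1p
  have hgi : Integrable (fun y => |f y| ^ p) μ := by
    have h := hfm.integrable_norm_rpow (by simpa using (ENNReal.ofReal_pos.2 hp0).ne')
      ENNReal.ofReal_ne_top
    simpa [Real.norm_eq_abs, ENNReal.toReal_ofReal hp0.le] using h
  have h1 : |⨍ y, f y ∂μ| ≤ ⨍ y, |f y| ∂μ := by
    rw [average_eq, average_eq, smul_eq_mul, smul_eq_mul, abs_mul,
      abs_of_nonneg (inv_nonneg.2 measureReal_nonneg)]
    refine mul_le_mul_of_nonneg_left ?_ (inv_nonneg.2 ENNReal.toReal_nonneg)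
    simpa [Real.norm_eq_abs] using MeasureTheory.norm_integral_le_integral_norm (μ := μ) f
  have h2 : (⨍ y, |f y| ∂μ) ^ p ≤ ⨍ y, |f y| ^ p ∂μ := by
    have hconv := convexOn_rpow hp
    have hcont : ContinuousOn (fun z : ℝ => z ^ p) (Set.Ici 0) :=
      (Real.continuous_rpow_const hp0.le).continuousOn
    exact hconv.map_average_le hcont isClosed_Ici
      (Filter.Eventually.of_forall fun y => abs_nonneg (f y)) hfi.abs hgi
  have hA : l * t ^ (1 / p) < ⨍ y, |f y| ∂μ := lt_of_lt_of_le hlt h1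
  have h0 : (0 : ℝ) ≤ l * t ^ (1 / p) := by positivity
  have heq : (l * t ^ (1 / p)) ^ p = l ^ p * t := by
    rw [Real.mul_rpow hl.le (Real.rpow_nonneg ht.le _), ← Real.rpow_mul ht.le,
      one_div_mul_cancel (ne_of_gt hp0), Real.rpow_one]
  have h3 : l ^ p * t < ⨍ y, |f y| ^ p ∂μ := by
    calc l ^ p * t = (l * t ^ (1 / p)) ^ p := heq.symm
      _ < (⨍ y, |f y| ∂μ) ^ p := Real.rpow_lt_rpow h0 hA hp0
      _ ≤ ⨍ y, |f y| ^ p ∂μ := h2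
  set MB : ℝ := (m B).toReal with hMB
  have hMBpos : 0 < MB := ENNReal.toReal_pos hpos.ne' hfin.ne
  have h4 : l ^ p * t * MB < ∫ y, |f y| ^ p ∂μ := by
    have h := mul_lt_mul_of_pos_right h3 hMBpos
    rwa [average_eq, measureReal_def, hμuniv, smul_eq_mul, ← hMB, inv_mul_eq_div,
      div_mul_cancel₀ _ hMBpos.ne'] at h
  have h5 : ENNReal.ofReal (∫ y, |f y| ^ p ∂μ) = ∫⁻ y, ENNReal.ofReal (|f y| ^ p) ∂μ :=
    MeasureTheory.ofReal_integral_eq_lintegral_ofReal hgi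
      (Filter.Eventually.of_forall fun y => Real.rpow_nonneg (abs_nonneg _) p)
  have h6 : ENNReal.ofReal (l ^ p * t * MB) < ∫⁻ y, ENNReal.ofReal (|f y| ^ p) ∂μ := by
    rw [← h5]
    exact (ENNReal.ofReal_lt_ofReal_iff_of_nonneg (by positivity)).2 h4
  have h7 : ENNReal.ofReal (l ^ p * t * MB)
      = ENNReal.ofReal (l ^ p) * (ENNReal.ofReal t * m B) := by
    rw [ENNReal.ofReal_mul (by positivity), ENNReal.ofReal_mul (by positivity), hMB,
      ENNReal.ofReal_toReal hfin.ne, mul_assoc]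
  rw [← h7]
  exact h6

/-- Auxiliary covering lemma (Vitali): if every point of `E ⊆ X × (0, R]` is "bad", then the
product measure of `E` is controlled. -/
lemma weak_type_aux_cover {X : Type*} [MetricSpace X] [MeasurableSpace X] [BorelSpace X]
    (m : Measure X) [SigmaFinite m] {a : ℝ}
    (hpos : ∀ (x : X) (r : ℝ), 0 < r → 0 < m (Metric.ball x r))
    (hdoub : ∀ (x : X) (r : ℝ), 0 < r →
      m (Metric.ball x (2 * r)) ≤ ENNReal.ofReal a * m (Metric.ball x r))
    (g : X → ℝ≥0∞) (c : ℝ≥0∞) (hc0 : c ≠ 0) (hctop : c ≠ ∞)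
    (E : Set (X × ℝ)) (R : ℝ)
    (hE : ∀ q : X × ℝ, q ∈ E → (0 < q.2 ∧ q.2 ≤ R) ∧
      c * (ENNReal.ofReal q.2 * m (Metric.ball q.1 q.2)) < ∫⁻ y in Metric.ball q.1 q.2, g y ∂m) :
    (m.prod (volume.restrict (Set.Ioi (0 : ℝ)))) E ≤
      ENNReal.ofReal 4 * ENNReal.ofReal a ^ 2 * (∫⁻ y, g y ∂m) / c := by
  classical
  set bad : X → Set ℝ := fun x => {r | (0 < r ∧ r ≤ R) ∧
      c * (ENNReal.ofReal r * m (Metric.ball x r)) < ∫⁻ y in Metric.ball x r, g y ∂m} with hbad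
  set S : Set X := {x | (bad x).Nonempty} with hS
  have hbdd : ∀ x, BddAbove (bad x) := fun x => ⟨R, fun r hr => hr.1.2⟩
  have hsel : ∀ x, x ∈ S → ∃ ρ, ρ ∈ bad x ∧ sSup (bad x) / 2 < ρ := by
    intro x hx
    have hτpos : 0 < sSup (bad x) := by
      obtain ⟨r₀, hr₀⟩ := hx
      exact lt_of_lt_of_le hr₀.1.1 (le_csSup (hbdd x) hr₀)
    obtain ⟨ρ, hρ, h2⟩ := exists_lt_of_lt_csSup hx
      (by linarith : sSup (bad x) / 2 < sSup (bad x))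
    exact ⟨ρ, hρ, h2⟩
  set r : X → ℝ := fun x => if hx : x ∈ S then (hsel x hx).choose else 0 with hrdef
  have hrmem : ∀ x ∈ S, r x ∈ bad x := by
    intro x hx; rw [hrdef]; simp only [dif_pos hx]; exact (hsel x hx).choose_spec.1
  have hrbig : ∀ x ∈ S, sSup (bad x) / 2 < r x := by
    intro x hx; rw [hrdef]; simp only [dif_pos hx]; exact (hsel x hx).choose_spec.2
  obtain ⟨u, huS, hudisj, hucov⟩ :=
    Vitali.exists_disjoint_subfamily_covering_enlargement
      (fun x => Metric.ball x (r x)) S r 2 one_lt_two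
      (fun x hx => ((hrmem x hx).1.1).le) R (fun x hx => (hrmem x hx).1.2)
      (fun x hx => ⟨x, Metric.mem_ball_self (hrmem x hx).1.1⟩)
  have hdisj : Pairwise (Function.onFun Disjoint fun i : u => Metric.ball (i : X) (r i)) := by
    intro i j hij
    exact hudisj i.2 j.2 (Subtype.coe_injective.ne hij)
  have hu_cnt : u.Countable := by
    have hcnt := MeasureTheory.Measure.countable_meas_pos_of_disjoint_iUnion
      (μ := m) (fun i : u => measurableSet_ball) hdisj
    have huniv : {i : u | 0 < m (Metric.ball (i : X) (r i))} = Set.univ :=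
      Set.eq_univ_of_forall fun i => hpos _ _ (hrmem _ (huS i.2)).1.1
    rw [huniv, Set.countable_univ_iff] at hcnt
    exact Set.countable_coe_iff.mpr hcnt
  have hcov : E ⊆ ⋃ b ∈ u, (Metric.ball b (3 * r b)) ×ˢ (Set.Ioc 0 (4 * r b)) := by
    rintro ⟨x, t⟩ hq
    have hPt : t ∈ bad x := hE (x, t) hq
    have hxS : x ∈ S := ⟨t, hPt⟩
    have htsup : t ≤ sSup (bad x) := le_csSup (hbdd x) hPt
    obtain ⟨b, hbu, hint, hle⟩ := hucov x hxS
    have hrb : 0 < r b := (hrmem b (huS hbu)).1.1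
    have hrx : 0 < r x := (hrmem x hxS).1.1
    obtain ⟨z, hz1, hz2⟩ := hint
    rw [Metric.mem_ball] at hz1 hz2
    have hdxz : dist x z < r x := by rwa [dist_comm] at hz1
    have hdxb : dist x b < 3 * r b := by
      have h := dist_triangle x z b
      linarith
    have ht4 : t ≤ 4 * r b := by
      have h := hrbig x hxS
      linarith
    exact Set.mem_biUnion hbu ⟨Metric.mem_ball.2 hdxb, ⟨hPt.1.1, ht4⟩⟩
  calc (m.prod (volume.restrict (Set.Ioi (0 : ℝ)))) E
      ≤ (m.prod (volume.restrict (Set.Ioi (0 : ℝ))))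
          (⋃ b ∈ u, (Metric.ball b (3 * r b)) ×ˢ (Set.Ioc 0 (4 * r b))) := measure_mono hcov
    _ ≤ ∑' b : u, (m.prod (volume.restrict (Set.Ioi (0 : ℝ))))
          ((Metric.ball (b : X) (3 * r b)) ×ˢ (Set.Ioc 0 (4 * r b))) :=
        measure_biUnion_le _ hu_cnt _
    _ ≤ ∑' b : u, (ENNReal.ofReal 4 * ENNReal.ofReal a ^ 2) *
          ((∫⁻ y in Metric.ball (b : X) (r b), g y ∂m) / c) := by
        refine ENNReal.tsum_le_tsum fun b => ?_
        have hrb : 0 < r b := (hrmem b (huS b.2)).1.1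
        have hPb := (hrmem b (huS b.2)).2
        rw [Measure.prod_prod]
        have h5 : m (Metric.ball (b : X) (3 * r b))
            ≤ ENNReal.ofReal a ^ 2 * m (Metric.ball (b : X) (r b)) := by
          calc m (Metric.ball (b : X) (3 * r b))
              ≤ m (Metric.ball (b : X) (2 * (2 * r b))) :=
                measure_mono (Metric.ball_subset_ball (by linarith))
            _ ≤ ENNReal.ofReal a * m (Metric.ball (b : X) (2 * r b)) :=
                hdoub _ _ (by linarith)
            _ ≤ ENNReal.ofReal a * (ENNReal.ofReal a * m (Metric.ball (b : X) (r b))) :=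
                mul_le_mul' le_rfl (hdoub _ _ hrb)
            _ = ENNReal.ofReal a ^ 2 * m (Metric.ball (b : X) (r b)) := by ring
        have h6 : (volume.restrict (Set.Ioi (0 : ℝ))) (Set.Ioc 0 (4 * r b))
            ≤ ENNReal.ofReal (4 * r b) := by
          rw [Measure.restrict_apply measurableSet_Ioc]
          refine le_trans (measure_mono Set.inter_subset_left) ?_
          rw [Real.volume_Ioc]
          simp
        have h7 : ENNReal.ofReal (r b) * m (Metric.ball (b : X) (r b))
            ≤ (∫⁻ y in Metric.ball (b : X) (r b), g y ∂m) / c :=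
          (ENNReal.le_div_iff_mul_le (Or.inl hc0) (Or.inl hctop)).2
            (by rw [mul_comm]; exact hPb.le)
        calc m (Metric.ball (b : X) (3 * r b)) *
              (volume.restrict (Set.Ioi (0 : ℝ))) (Set.Ioc 0 (4 * r b))
            ≤ (ENNReal.ofReal a ^ 2 * m (Metric.ball (b : X) (r b))) *
                ENNReal.ofReal (4 * r b) := mul_le_mul' h5 h6
          _ = (ENNReal.ofReal 4 * ENNReal.ofReal a ^ 2) *
                (ENNReal.ofReal (r b) * m (Metric.ball (b : X) (r b))) := by
              rw [ENNReal.ofReal_mul (by norm_num : (0:ℝ) ≤ 4)]; ring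
          _ ≤ _ := mul_le_mul' le_rfl h7
    _ = (ENNReal.ofReal 4 * ENNReal.ofReal a ^ 2) *
          ∑' b : u, ((∫⁻ y in Metric.ball (b : X) (r b), g y ∂m) / c) := ENNReal.tsum_mul_left
    _ ≤ _ := by
        have hsum : (∑' b : u, ((∫⁻ y in Metric.ball (b : X) (r b), g y ∂m) / c))
            = (∑' b : u, ∫⁻ y in Metric.ball (b : X) (r b), g y ∂m) / c := by
          simp_rw [div_eq_mul_inv]
          rw [ENNReal.tsum_mul_right]
        have hint : (∑' b : u, ∫⁻ y in Metric.ball (b : X) (r b), g y ∂m) ≤ ∫⁻ y, g y ∂m := by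
          haveI : Countable ↥u := hu_cnt.to_subtype
          rw [← MeasureTheory.lintegral_iUnion (fun i : u => measurableSet_ball) hdisj g]
          exact MeasureTheory.setLIntegral_le_lintegral _ _
        rw [hsum, mul_div_assoc]
        exact mul_le_mul' le_rfl (ENNReal.div_le_div_right hint c)

/-- Theorem (weak-type `(p,p)` bound on the product space for ball averages over a doubling
metric measure space). -/
theorem weak_type_ball_averages_doubling
    {X : Type*} [MetricSpace X] [MeasurableSpace X] [BorelSpace X]
    (m : Measure X) [SigmaFinite m]
    (Cd : ℝ)
    (hdoub : ∀ (x : X) (r : ℝ), 0 < r →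
      0 < m (Metric.ball x r) ∧
      m (Metric.ball x (2 * r)) ≤ ENNReal.ofReal Cd * m (Metric.ball x r) ∧
      m (Metric.ball x (2 * r)) < ∞)
    (p : ℝ) (hp : 1 ≤ p) :
    ∃ C > (0 : ℝ), ∀ f : X → ℝ, MemLp f (ENNReal.ofReal p) m → ∀ l > (0 : ℝ),
      (m.prod (volume.restrict (Set.Ioi (0 : ℝ))))
          {q : X × ℝ | 0 < q.2 ∧ l * q.2 ^ (1 / p) < |⨍ y in Metric.ball q.1 q.2, f y ∂m|}
        ≤ ENNReal.ofReal C * (∫⁻ x, ENNReal.ofReal (|f x| ^ p) ∂m) / ENNReal.ofReal (l ^ p) := by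
  classical
  have hp0 : (0 : ℝ) < p := lt_of_lt_of_le one_pos hp
  set a : ℝ := max Cd 1 with hadef
  have ha1 : (1 : ℝ) ≤ a := le_max_right _ _
  have hpos : ∀ (x : X) (r : ℝ), 0 < r → 0 < m (Metric.ball x r) :=
    fun x r hr => (hdoub x r hr).1
  have hfin : ∀ (x : X) (r : ℝ), m (Metric.ball x r) < ∞ := by
    intro x r
    rcases le_or_gt r 0 with h | h
    · rw [Metric.ball_eq_empty.2 h]; simp
    · exact lt_of_le_of_lt (measure_mono (Metric.ball_subset_ball (by linarith)))
        (hdoub x r h).2.2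
  have hdoub' : ∀ (x : X) (r : ℝ), 0 < r →
      m (Metric.ball x (2 * r)) ≤ ENNReal.ofReal a * m (Metric.ball x r) := by
    intro x r hr
    exact le_trans (hdoub x r hr).2.1
      (mul_le_mul' (ENNReal.ofReal_le_ofReal (le_max_left _ _)) le_rfl)
  refine ⟨4 * a ^ 2, by positivity, ?_⟩
  intro f hf l hl
  set E : Set (X × ℝ) := {q : X × ℝ | 0 < q.2 ∧
    l * q.2 ^ (1 / p) < |⨍ y in Metric.ball q.1 q.2, f y ∂m|} with hEdef
  have hlp : (0 : ℝ) < l ^ p := Real.rpow_pos_of_pos hl p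
  have hmain : ∀ n : ℕ, (m.prod (volume.restrict (Set.Ioi (0 : ℝ))))
      (E ∩ {q : X × ℝ | q.2 ≤ (n : ℝ) + 1})
      ≤ ENNReal.ofReal (4 * a ^ 2) * (∫⁻ x, ENNReal.ofReal (|f x| ^ p) ∂m) /
        ENNReal.ofReal (l ^ p) := by
    intro n
    have hb := weak_type_aux_cover m hpos hdoub'
      (fun y => ENNReal.ofReal (|f y| ^ p)) (ENNReal.ofReal (l ^ p))
      (by simpa using (ENNReal.ofReal_pos.2 hlp).ne') ENNReal.ofReal_ne_top
      (E ∩ {q : X × ℝ | q.2 ≤ (n : ℝ) + 1}) ((n : ℝ) + 1) ?_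
    · refine le_trans hb (le_of_eq ?_)
      rw [ENNReal.ofReal_mul (by norm_num : (0:ℝ) ≤ 4),
        ENNReal.ofReal_pow (le_trans zero_le_one ha1)]
    · rintro ⟨x, t⟩ ⟨hq, htn⟩
      exact ⟨⟨hq.1, htn⟩,
        weak_type_aux_avg_bad m hp hf hl hq.1 (hpos x t hq.1) (hfin x t) hq.2⟩
  have hEeq : E = ⋃ n : ℕ, E ∩ {q : X × ℝ | q.2 ≤ (n : ℝ) + 1} := by
    ext q
    simp only [Set.mem_iUnion, Set.mem_inter_iff, Set.mem_setOf_eq]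
    constructor
    · intro hq
      obtain ⟨n, hn⟩ := exists_nat_ge q.2
      exact ⟨n, hq, by linarith⟩
    · rintro ⟨n, hq, -⟩; exact hq
  have hmono : Monotone (fun n : ℕ => E ∩ {q : X × ℝ | q.2 ≤ (n : ℝ) + 1}) := by
    intro i j hij
    refine Set.inter_subset_inter le_rfl ?_
    intro q hq
    simp only [Set.mem_setOf_eq] at hq ⊢
    have : (i : ℝ) ≤ (j : ℝ) := Nat.cast_le.2 hij
    linarith
  have hdir : Directed (· ⊆ ·) (fun n : ℕ => E ∩ {q : X × ℝ | q.2 ≤ (n : ℝ) + 1}) :=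
    hmono.directed_le
  have hsup := hdir.measure_iUnion (μ := m.prod (volume.restrict (Set.Ioi (0 : ℝ))))
  rw [← hEeq] at hsup
  rw [hsup]
  exact iSup_le hmain
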